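/- arXiv:2602.13149 — 2 statements merged into one kernel-verified Lean document; each statement's English description precedes it below -/
import Mathlib

section
/- If H_i is a connected hypergraph containing at least one non-singleton hyperedge, and B_i is a nonempty lazy burning set of H_i, then for any vertex v ∈ B_i and any non-singleton hyperedge h containing v, the set B_i ∪ E(H_i) \ {h} is a zero forcing set of the incidence graph IG(H_i); in particular, Z(IG(H_i)) ≤ b_L(H_i) + |E(H_i)| − 1. -/
/-- Zero forcing closure: vertices eventually colored blue. -/
inductive SimpleGraph.Forced {V : Type*} (G : SimpleGraph V) (B : Set V) : V → Prop
  | init (v : V) (hv : v ∈ B) : SimpleGraph.Forced G B v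
  | force (v w : V) (hv : SimpleGraph.Forced G B v) (hadj : G.Adj v w)
      (hall : ∀ u, G.Adj v u → u ≠ w → SimpleGraph.Forced G B u) : SimpleGraph.Forced G B w

def SimpleGraph.IsZeroForcingSet {V : Type*} (G : SimpleGraph V) (B : Set V) : Prop :=
  ∀ v, G.Forced B v

noncomputable def SimpleGraph.zeroForcingNumber {V : Type*} (G : SimpleGraph V) : ℕ :=
  sInf {n | ∃ B : Set V, B.ncard = n ∧ G.IsZeroForcingSet B}

/-- closed ball of radius r -/
def SimpleGraph.closedBall {V : Type*} (G : SimpleGraph V) (v : V) (r : ℕ) : Set V :=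
  {w | G.edist v w ≤ (r : ℕ∞)}

/-- Burning sequence (alternative characterization). -/
def SimpleGraph.IsBurningSeq {V : Type*} (G : SimpleGraph V) {k : ℕ} (s : Fin k → V) : Prop :=
  (∀ i j : Fin k, i ≠ j →
      ((((i : ℕ) : ℤ) - ((j : ℕ) : ℤ)).natAbs : ℕ∞) ≤ G.edist (s i) (s j)) ∧
  (⋃ l : Fin k, G.closedBall (s l) (k - 1 - (l : ℕ))) = Set.univ

noncomputable def SimpleGraph.burningNumber {V : Type*} (G : SimpleGraph V) : ℕ :=
  sInf {k | ∃ s : Fin k → V, G.IsBurningSeq s}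

/-- Strong product of graphs. -/
def SimpleGraph.strongProd {α β : Type*} (G : SimpleGraph α) (H : SimpleGraph β) :
    SimpleGraph (α × β) where
  Adj x y := (x.1 = y.1 ∧ H.Adj x.2 y.2) ∨ (x.2 = y.2 ∧ G.Adj x.1 y.1) ∨
    (G.Adj x.1 y.1 ∧ H.Adj x.2 y.2)
  symm := ⟨by
    rintro ⟨a, b⟩ ⟨c, d⟩ (⟨h1, h2⟩ | ⟨h1, h2⟩ | ⟨h1, h2⟩)
    · exact Or.inl ⟨h1.symm, h2.symm⟩
    · exact Or.inr (Or.inl ⟨h1.symm, h2.symm⟩)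
    · exact Or.inr (Or.inr ⟨h1.symm, h2.symm⟩)⟩
  loopless := ⟨by
    rintro ⟨a, b⟩ (⟨_, h2⟩ | ⟨_, h2⟩ | ⟨h1, _⟩)
    exacts [H.loopless.irrefl b h2, G.loopless.irrefl a h2, G.loopless.irrefl a h1]⟩

instance {α β : Type*} (G : SimpleGraph α) (H : SimpleGraph β)
    [DecidableEq α] [DecidableEq β] [DecidableRel G.Adj] [DecidableRel H.Adj] :
    DecidableRel (G.strongProd H).Adj :=
  fun _ _ => inferInstanceAs (Decidable (_ ∨ _ ∨ _))

section Hypergraph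
variable {V : Type*} [DecidableEq V]

/-- Lazy burning closure on a hypergraph given by its edge set. -/
inductive LazyBurned (E : Finset (Finset V)) (B : Set V) : V → Prop
  | init (v : V) (hv : v ∈ B) : LazyBurned E B v
  | spread (v : V) (h : Finset V) (hE : h ∈ E) (hcard : 2 ≤ h.card) (hv : v ∈ h)
      (hall : ∀ u ∈ h, u ≠ v → LazyBurned E B u) : LazyBurned E B v

def IsLazyBurningSet (E : Finset (Finset V)) (B : Set V) : Prop := ∀ v, LazyBurned E B v

noncomputable def lazyBurningNumber (E : Finset (Finset V)) : ℕ :=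
  sInf {n | ∃ B : Set V, B.ncard = n ∧ IsLazyBurningSet E B}

/-- one round of propagation in hypergraph burning -/
def hSpread (E : Finset (Finset V)) (S : Set V) : Set V :=
  S ∪ {v | ∃ h ∈ E, 2 ≤ h.card ∧ v ∈ h ∧ ∀ u ∈ h, u ≠ v → u ∈ S}

/-- burned vertices after t rounds of the (round-based) hypergraph burning process -/
def hBurnedAt (E : Finset (Finset V)) {k : ℕ} (s : Fin k → V) : ℕ → Set V
  | 0 => ∅
  | t + 1 => hSpread E (hBurnedAt E s t) ∪ {v | ∃ ht : t < k, v = s ⟨t, ht⟩}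

noncomputable def hBurningNumber (E : Finset (Finset V)) : ℕ :=
  sInf {k | ∃ s : Fin k → V,
    (∀ t : Fin k, s t ∉ hBurnedAt E s (t : ℕ)) ∧ hBurnedAt E s k = Set.univ}

/-- incidence graph of a hypergraph -/
def IG (E : Finset (Finset V)) : SimpleGraph (V ⊕ {h // h ∈ E}) where
  Adj x y := (∃ v h, x = Sum.inl v ∧ y = Sum.inr h ∧ v ∈ (h : Finset V)) ∨
    (∃ v h, x = Sum.inr h ∧ y = Sum.inl v ∧ v ∈ (h : Finset V))
  symm := ⟨by
    rintro x y (⟨v, h, rfl, rfl, hm⟩ | ⟨v, h, rfl, rfl, hm⟩)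
    · exact Or.inr ⟨v, h, rfl, rfl, hm⟩
    · exact Or.inl ⟨v, h, rfl, rfl, hm⟩⟩
  loopless := ⟨by
    rintro x (⟨v, h, rfl, he, hm⟩ | ⟨v, h, rfl, he, hm⟩) <;> simp at he⟩

/-- connectivity relation of a hypergraph -/
def hconn (E : Finset (Finset V)) : V → V → Prop :=
  Relation.ReflTransGen (fun u v => ∃ h ∈ E, u ∈ h ∧ v ∈ h)

end Hypergraph

lemma lazyBurned_nonempty {V : Type*} [DecidableEq V] {E : Finset (Finset V)} {B : Set V}
    {v : V} (hv : LazyBurned E B v) : B.Nonempty := by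
  induction hv with
  | init v hv => exact ⟨v, hv⟩
  | spread v h hE hcard hv hall IH =>
    obtain ⟨u, hu, hne⟩ := Finset.exists_mem_ne (show 1 < h.card by omega) v
    exact IH u hu hne

lemma zfs_of_lazy {V : Type*} [Fintype V] [DecidableEq V] (E : Finset (Finset V))
    (B : Set V) (hlazy : IsLazyBurningSet E B)
    (h : Finset V) (hE : h ∈ E) (hcard : 2 ≤ h.card) :
    (IG E).IsZeroForcingSet
      (Sum.inl '' B ∪ Sum.inr '' {e : {x // x ∈ E} | (e : Finset V) ≠ h}) := by
  set Z : Set (V ⊕ {x // x ∈ E}) :=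
    Sum.inl '' B ∪ Sum.inr '' {e : {x // x ∈ E} | (e : Finset V) ≠ h} with hZ
  -- every edge other than h is initially blue
  have blueE : ∀ e : {x // x ∈ E}, (e : Finset V) ≠ h → (IG E).Forced Z (Sum.inr e) :=
    fun e he => .init _ (Or.inr ⟨e, he, rfl⟩)
  -- if some vertex of h is forced, then h is forced
  have key : ∀ w ∈ h, (IG E).Forced Z (Sum.inl w) →
      (IG E).Forced Z (Sum.inr (⟨h, hE⟩ : {x // x ∈ E})) := by
    intro w hw hwF
    refine .force (Sum.inl w) _ hwF (Or.inl ⟨w, ⟨h, hE⟩, rfl, rfl, hw⟩) ?_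
    intro u hadj hne
    rcases hadj with ⟨v', h', heq, rfl, hm⟩ | ⟨v', h', heq, _, _⟩
    · exact blueE h' (fun hc => hne (congrArg Sum.inr (Subtype.ext hc)))
    · simp at heq
  -- every lazily burned vertex is forced
  have allInl : ∀ w, LazyBurned E B w → (IG E).Forced Z (Sum.inl w) := by
    intro w hw
    induction hw with
    | init v hv => exact .init _ (Or.inl ⟨v, hv, rfl⟩)
    | spread v' h' hE' hcard' hv' hall IH =>
      have hInr : (IG E).Forced Z (Sum.inr (⟨h', hE'⟩ : {x // x ∈ E})) := by
        by_cases hh : h' = h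
        · subst hh
          obtain ⟨w, hwmem, hwne⟩ := Finset.exists_mem_ne (show 1 < h'.card by omega) v'
          exact key w hwmem (IH w hwmem hwne)
        · exact blueE _ hh
      refine .force _ _ hInr (Or.inr ⟨v', ⟨h', hE'⟩, rfl, rfl, hv'⟩) ?_
      intro u hadj hne
      rcases hadj with ⟨v'', h'', heq, _, _⟩ | ⟨v'', h'', heq, rfl, hm⟩
      · simp at heq
      · have : v'' ∈ h' := by
          have : h'' = (⟨h', hE'⟩ : {x // x ∈ E}) := by
            injection heq with h1; exact h1.symm
          rw [this] at hm; exact hm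
        exact IH v'' this (fun hc => hne (by rw [hc]))
  intro x
  rcases x with w | e
  · exact allInl w (hlazy w)
  · by_cases he : (e : Finset V) = h
    · obtain ⟨w, hw⟩ := Finset.card_pos.mp (by omega : 0 < h.card)
      have := key w hw (allInl w (hlazy w))
      have heq : e = (⟨h, hE⟩ : {x // x ∈ E}) := Subtype.ext he
      rw [heq]; exact this
    · exact blueE e he

/-- For a connected hypergraph with a non-singleton hyperedge and a nonempty lazy burning set
`B`, removing from `B ∪ E(H)` any non-singleton hyperedge containing a vertex of `B` still
yields a zero forcing set of the incidence graph; hence `Z(IG(H)) ≤ b_L(H) + |E(H)| - 1`. -/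
theorem stmt7 {V : Type*} [Fintype V] [DecidableEq V] (E : Finset (Finset V))
    (hconnected : ∀ u v : V, hconn E u v)
    (B : Set V) (hBne : B.Nonempty) (hlazy : IsLazyBurningSet E B)
    (v : V) (hvB : v ∈ B) (h : Finset V) (hE : h ∈ E) (hcard : 2 ≤ h.card) (hvh : v ∈ h) :
    (IG E).IsZeroForcingSet
      (Sum.inl '' B ∪ Sum.inr '' {e : {x // x ∈ E} | (e : Finset V) ≠ h}) ∧
    (IG E).zeroForcingNumber ≤ lazyBurningNumber E + E.card - 1 := by
  constructor
  · exact zfs_of_lazy E B hlazy h hE hcard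
  · -- there is an optimal lazy burning set
    have hne : {n | ∃ B : Set V, B.ncard = n ∧ IsLazyBurningSet E B}.Nonempty :=
      ⟨(Set.univ : Set V).ncard, Set.univ, rfl, fun v => .init v trivial⟩
    obtain ⟨B₀, hB₀card, hB₀lazy⟩ := Nat.sInf_mem hne
    set Z : Set (V ⊕ {x // x ∈ E}) :=
      Sum.inl '' B₀ ∪ Sum.inr '' {e : {x // x ∈ E} | (e : Finset V) ≠ h} with hZ
    have hZF : (IG E).IsZeroForcingSet Z := zfs_of_lazy E B₀ hB₀lazy h hE hcard
    -- cardinality computations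
    have hEcard : Nat.card {x // x ∈ E} = E.card := by
      rw [Nat.card_eq_fintype_card, Fintype.card_coe]
    have hset : {e : {x // x ∈ E} | (e : Finset V) ≠ h} =
        ({(⟨h, hE⟩ : {x // x ∈ E})} : Set {x // x ∈ E})ᶜ := by
      ext e
      simp [Subtype.ext_iff]
    have hcompl : ({(⟨h, hE⟩ : {x // x ∈ E})} : Set {x // x ∈ E})ᶜ.ncard = E.card - 1 := by
      have h1 := Set.ncard_add_ncard_compl
        ({(⟨h, hE⟩ : {x // x ∈ E})} : Set {x // x ∈ E})
      rw [Set.ncard_singleton, hEcard] at h1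
      omega
    have hdisj : Disjoint (Sum.inl '' B₀ : Set (V ⊕ {x // x ∈ E}))
        (Sum.inr '' {e : {x // x ∈ E} | (e : Finset V) ≠ h}) := by
      rw [Set.disjoint_left]
      rintro x ⟨a, _, rfl⟩ ⟨b, _, hb⟩
      exact Sum.inl_ne_inr hb.symm
    have hZcard : Z.ncard = lazyBurningNumber E + (E.card - 1) := by
      rw [hZ, Set.ncard_union_eq hdisj (Set.toFinite _) (Set.toFinite _),
        Set.ncard_image_of_injective _ Sum.inl_injective,
        Set.ncard_image_of_injective _ Sum.inr_injective, hset, hcompl, hB₀card]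
      rfl
    have hEpos : 1 ≤ E.card := Finset.card_pos.mpr ⟨h, hE⟩
    have : (IG E).zeroForcingNumber ≤ lazyBurningNumber E + (E.card - 1) :=
      Nat.sInf_le ⟨Z, hZcard, hZF⟩
    omega
end

section
/- Let G be a graph, n ≥ 2, and suppose (w_1, ..., w_l) with w_j = (v_j, u_{m_j}) is a burning sequence for G ⊠ K_n. Then (v_1, ..., v_{l−1}) together with v_l covers G in the sense that ∪_{j=1}^{l−1} N_{l−j}[v_j] = V(G); in particular b(G ⊠ K_n) ≥ b(G) whenever G admits such a structure, i.e., b(G ⊠ K_n) cannot be strictly less than b(G). -/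
open Classical in
noncomputable def gr {α : Type*} [Nonempty α] (G : SimpleGraph α) (x : ℕ → α) : ℕ → α
  | j =>
    let burned : Set α := ⋃ i : Fin j, {v | G.edist (gr G x i) v ≤ ((j - 1 - (i : ℕ) : ℕ) : ℕ∞)}
    if x j ∈ burned then
      (if h2 : ∃ v, v ∉ burned then h2.choose else Classical.arbitrary α)
    else x j
  decreasing_by exact i.isLt

def burnedAt {α : Type*} [Nonempty α] (G : SimpleGraph α) (x : ℕ → α) (j : ℕ) : Set α :=
  ⋃ i : Fin j, {v | G.edist (gr G x i) v ≤ ((j - 1 - (i : ℕ) : ℕ) : ℕ∞)}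

open Classical in
lemma gr_def {α : Type*} [Nonempty α] (G : SimpleGraph α) (x : ℕ → α) (j : ℕ) :
    gr G x j = if x j ∈ burnedAt G x j then
      (if h2 : ∃ v, v ∉ burnedAt G x j then h2.choose else Classical.arbitrary α)
    else x j := by
  rw [gr]
  rfl

open Classical in
lemma gr_not_burned {α : Type*} [Nonempty α] (G : SimpleGraph α) (x : ℕ → α) (j : ℕ)
    (h : ∃ v, v ∉ burnedAt G x j) : gr G x j ∉ burnedAt G x j := by
  rw [gr_def]
  by_cases hx : x j ∈ burnedAt G x j
  · rw [if_pos hx, dif_pos h]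
    exact h.choose_spec
  · rw [if_neg hx]
    exact hx

open Classical in
lemma gr_mem_or_eq {α : Type*} [Nonempty α] (G : SimpleGraph α) (x : ℕ → α) (j : ℕ) :
    x j ∈ burnedAt G x j ∨ gr G x j = x j := by
  rw [gr_def]
  by_cases hx : x j ∈ burnedAt G x j
  · exact Or.inl hx
  · rw [if_neg hx]
    exact Or.inr rfl

lemma greedy_lemma {α : Type*} [Nonempty α] (G : SimpleGraph α) (k : ℕ) (x : ℕ → α)
    (hcov : ∀ v, ∃ j < k, G.edist (x j) v ≤ ((k - 1 - j : ℕ) : ℕ∞)) :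
    ∃ m ≤ k, ∃ s : Fin m → α, G.IsBurningSeq s := by
  classical
  have hA : ∀ v, v ∈ burnedAt G x k := by
    intro v
    obtain ⟨j, hj, hje⟩ := hcov v
    rcases gr_mem_or_eq G x j with hb | he
    · obtain ⟨S, ⟨i, rfl⟩, hi⟩ := hb
      refine Set.mem_iUnion.mpr ⟨⟨(i : ℕ), lt_trans i.isLt hj⟩, ?_⟩
      simp only [Set.mem_setOf_eq] at hi ⊢
      calc G.edist (gr G x ((i : ℕ))) v ≤ G.edist (gr G x (i : ℕ)) (x j) + G.edist (x j) v :=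
            SimpleGraph.edist_triangle
        _ ≤ ((j - 1 - (i : ℕ) : ℕ) : ℕ∞) + ((k - 1 - j : ℕ) : ℕ∞) := add_le_add hi hje
        _ = (((j - 1 - (i : ℕ)) + (k - 1 - j) : ℕ) : ℕ∞) := by rw [Nat.cast_add]
        _ ≤ ((k - 1 - (i : ℕ) : ℕ) : ℕ∞) := by
            refine Nat.cast_le.mpr ?_
            have := i.isLt
            omega
    · refine Set.mem_iUnion.mpr ⟨⟨j, hj⟩, ?_⟩
      simpa [he] using hje
  have hex : ∃ t, ∀ v, v ∈ burnedAt G x t := ⟨k, hA⟩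
  refine ⟨Nat.find hex, Nat.find_le hA, fun i => gr G x i, ?_, ?_⟩
  · -- distance condition
    have key : ∀ i j : ℕ, i < j → j < Nat.find hex →
        (((j - i : ℕ)) : ℕ∞) ≤ G.edist (gr G x i) (gr G x j) := by
      intro i j hij hjm
      have hnb : gr G x j ∉ burnedAt G x j := by
        apply gr_not_burned
        have := Nat.find_min hex hjm
        push_neg at this
        exact this
      have hn : ¬ G.edist (gr G x i) (gr G x j) ≤ ((j - 1 - i : ℕ) : ℕ∞) := by
        intro hle
        exact hnb (Set.mem_iUnion.mpr ⟨⟨i, hij⟩, hle⟩)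
      have hlt : ((j - 1 - i : ℕ) : ℕ∞) < G.edist (gr G x i) (gr G x j) := lt_of_not_ge hn
      have h1 : (((j - 1 - i) + 1 : ℕ) : ℕ∞) ≤ G.edist (gr G x i) (gr G x j) := by
        rw [Nat.cast_add, Nat.cast_one]
        exact Order.add_one_le_of_lt hlt
      refine le_trans (Nat.cast_le.mpr ?_) h1
      omega
    intro i j hij
    rcases lt_or_gt_of_ne (fun h : (i : ℕ) = (j : ℕ) => hij (Fin.ext h)) with h | h
    · have hk := key i j h j.isLt
      refine le_trans (le_of_eq ?_) hk
      congr 1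
      omega
    · have hk := key j i h i.isLt
      rw [SimpleGraph.edist_comm]
      refine le_trans (le_of_eq ?_) hk
      congr 1
      omega
  · -- coverage
    have hspec := Nat.find_spec hex
    rw [Set.eq_univ_iff_forall]
    intro v
    obtain ⟨S, ⟨i, rfl⟩, hi⟩ := hspec v
    exact Set.mem_iUnion.mpr ⟨i, hi⟩

lemma proj_edist {α β : Type*} (G : SimpleGraph α) (H : SimpleGraph β) (a b : α × β) :
    G.edist a.1 b.1 ≤ (G.strongProd H).edist a b := by
  rcases eq_or_ne ((G.strongProd H).edist a b) ⊤ with h | h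
  · exact h ▸ le_top
  · obtain ⟨p, hp⟩ := SimpleGraph.exists_walk_of_edist_ne_top h
    rw [← hp]
    clear hp h
    induction p with
    | nil => simp [SimpleGraph.edist_self]
    | cons hadj p ih =>
      rename_i u v w
      have hone : G.edist u.1 v.1 ≤ 1 := by
        rcases hadj with ⟨h1, h2⟩ | ⟨h1, h2⟩ | ⟨h1, h2⟩
        · rw [h1, SimpleGraph.edist_self]
          exact zero_le_one
        · exact le_trans (SimpleGraph.edist_le h2.toWalk) (by simp)
        · exact le_trans (SimpleGraph.edist_le h1.toWalk) (by simp)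
      refine le_trans SimpleGraph.edist_triangle (le_trans (add_le_add hone ih) ?_)
      rw [SimpleGraph.Walk.length_cons]
      push_cast
      rw [add_comm]

lemma cover_aux {α : Type*} (G : SimpleGraph α) {n : ℕ} (hn : 2 ≤ n) {l : ℕ}
    (σ : Fin l → α × Fin n)
    (hσ : (G.strongProd (SimpleGraph.completeGraph (Fin n))).IsBurningSeq σ) (v : α) :
    ∃ j : Fin l, (j : ℕ) < l - 1 ∧
      G.edist ((σ j).1) v ≤ ((l - 1 - (j : ℕ) : ℕ) : ℕ∞) := by
  haveI : Nontrivial (Fin n) := Fin.nontrivial_iff_two_le.mpr hn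
  have hcov : ∀ w : α × Fin n, ∃ j : Fin l,
      (G.strongProd (SimpleGraph.completeGraph (Fin n))).edist (σ j) w ≤ ((l - 1 - (j : ℕ) : ℕ) : ℕ∞) := by
    intro w
    have := hσ.2
    rw [Set.eq_univ_iff_forall] at this
    obtain ⟨S, ⟨j, rfl⟩, hj⟩ := this w
    exact ⟨j, hj⟩
  obtain ⟨j, hj⟩ := hcov (v, ⟨0, by omega⟩)
  have hjl : (j : ℕ) < l := j.isLt
  rcases lt_or_ge (j : ℕ) (l - 1) with hlt | hge
  · exact ⟨j, hlt, le_trans (proj_edist G _ (σ j) (v, ⟨0, by omega⟩)) hj⟩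
  · have hjeq : (j : ℕ) = l - 1 := by omega
    have h0 : ((l - 1 - (j : ℕ) : ℕ) : ℕ∞) = 0 := by
      rw [hjeq]
      simp
    rw [h0] at hj
    replace hj := SimpleGraph.edist_eq_zero_iff.mp (le_antisymm hj zero_le)
    obtain ⟨u', hu'⟩ := exists_ne ((σ j).2)
    obtain ⟨j', hj'⟩ := hcov (v, u')
    rcases lt_or_ge (j' : ℕ) (l - 1) with hlt' | hge'
    · exact ⟨j', hlt', le_trans (proj_edist G _ (σ j') (v, u')) hj'⟩
    · exfalso
      have hjeq' : (j' : ℕ) = l - 1 := by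
        have := j'.isLt
        omega
      have hjj : j' = j := Fin.ext (by omega)
      have h0' : ((l - 1 - (j' : ℕ) : ℕ) : ℕ∞) = 0 := by
        rw [hjeq']
        simp
      rw [h0', hjj] at hj'
      replace hj' := SimpleGraph.edist_eq_zero_iff.mp (le_antisymm hj' zero_le)
      apply hu'
      rw [hj']

/-- For `n ≥ 2`, the first coordinates of any burning sequence of `G ⊠ K_n`, except possibly
the last, already cover `G`; in particular `b(G ⊠ K_n)` cannot be less than `b(G)`. -/
theorem stmt15 {α : Type*} [Fintype α] (G : SimpleGraph α) (n : ℕ) (hn : 2 ≤ n) (l : ℕ)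
    (s : Fin l → α × Fin n)
    (hs : (G.strongProd (SimpleGraph.completeGraph (Fin n))).IsBurningSeq s) :
    (⋃ j ∈ {j : Fin l | (j : ℕ) < l - 1},
        G.closedBall ((s j).1) (l - 1 - (j : ℕ))) = Set.univ ∧
    G.burningNumber ≤ (G.strongProd (SimpleGraph.completeGraph (Fin n))).burningNumber := by
  constructor
  · rw [Set.eq_univ_iff_forall]
    intro v
    obtain ⟨j, hj1, hj2⟩ := cover_aux G hn s hs v
    simp only [Set.mem_iUnion, Set.mem_setOf_eq]
    exact ⟨j, hj1, hj2⟩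
  · set P := G.strongProd (SimpleGraph.completeGraph (Fin n)) with hP
    have hne : Set.Nonempty {k | ∃ σ : Fin k → α × Fin n, P.IsBurningSeq σ} := ⟨l, s, hs⟩
    have hmem := Nat.sInf_mem hne
    set k0 := sInf {k | ∃ σ : Fin k → α × Fin n, P.IsBurningSeq σ} with hk0
    obtain ⟨σ, hσ⟩ := hmem
    have hPk : P.burningNumber = k0 := rfl
    rw [hPk]
    by_cases hα : Nonempty α
    · have hcov : ∀ v, ∃ j < k0, G.edist
          ((fun j => if h : j < k0 then (σ ⟨j, h⟩).1 else Classical.arbitrary α) j) v ≤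
          ((k0 - 1 - j : ℕ) : ℕ∞) := by
        intro v
        obtain ⟨j, hj1, hj2⟩ := cover_aux G hn σ hσ v
        refine ⟨(j : ℕ), j.isLt, ?_⟩
        simp only [dif_pos j.isLt]
        simpa using hj2
      obtain ⟨m, hm, seq, hseq⟩ := greedy_lemma G k0 _ hcov
      exact le_trans (Nat.sInf_le ⟨seq, hseq⟩) hm
    · have h0 : (0 : ℕ) ∈ {k | ∃ s : Fin k → α, G.IsBurningSeq s} := by
        refine ⟨Fin.elim0, fun i => i.elim0, ?_⟩
        rw [Set.eq_univ_iff_forall]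
        intro v
        exact (hα ⟨v⟩).elim
      exact le_trans (Nat.sInf_le h0) (Nat.zero_le _)
end
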